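/- Fix λ ∈ ℚ, let K = ℚ(t), and for integers k ≥ 0, s ≥ 0 let F(k,s) ∈ K be the residue (coefficient of Y^{−1}) of N(Y)^k/(Y^{2s}D(Y)), where N(Y) = (1 − λY²/2)(1 − Y²t²) + 4t and D(Y) = e^{Y/2}(1+Yt)² − e^{−Y/2}(1−Yt)². Then for all 0 ≤ k ≤ s, the difference F(k,s) − (−1)^s·2^{3k−2s−2}·t^{k+s−1} is either zero or a rational function of t of total degree strictly less than k + s − 1. -/

import Mathlib

open PowerSeries

/-- `N(Y) = (1 - λY²/2)(1 - Y²t²) + 4t` as a formal power series in `Y` over `K = ℚ(t)`. -/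
noncomputable def Nser (lam : ℚ) : PowerSeries (RatFunc ℚ) :=
  (1 - PowerSeries.C (R := RatFunc ℚ) (algebraMap ℚ (RatFunc ℚ) lam / 2) *
      PowerSeries.X ^ 2) *
    (1 - PowerSeries.C (R := RatFunc ℚ) (RatFunc.X ^ 2) * PowerSeries.X ^ 2) +
  PowerSeries.C (R := RatFunc ℚ) (4 * RatFunc.X)

/-- `D(Y) = e^{Y/2}(1+Yt)² - e^{-Y/2}(1-Yt)²` as a formal power series in `Y` over
`K = ℚ(t)`. -/
noncomputable def DserK : PowerSeries (RatFunc ℚ) :=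
  PowerSeries.rescale (algebraMap ℚ (RatFunc ℚ) (1 / 2))
      (PowerSeries.exp (RatFunc ℚ)) *
      (1 + PowerSeries.C (R := RatFunc ℚ) RatFunc.X * PowerSeries.X) ^ 2 -
    PowerSeries.rescale (algebraMap ℚ (RatFunc ℚ) (-(1 / 2)))
      (PowerSeries.exp (RatFunc ℚ)) *
      (1 - PowerSeries.C (R := RatFunc ℚ) RatFunc.X * PowerSeries.X) ^ 2

/-- `F(k,s)`: the residue (coefficient of `Y⁻¹`) of the formal Laurent series
`N(Y)^k / (Y^{2s} D(Y))` over `K = ℚ(t)`. -/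
noncomputable def Fres (lam : ℚ) (k : ℕ) (s : ℤ) : RatFunc ℚ :=
  ((((Nser lam ^ k : PowerSeries (RatFunc ℚ)) : LaurentSeries (RatFunc ℚ))) /
    (((PowerSeries.X : PowerSeries (RatFunc ℚ)) : LaurentSeries (RatFunc ℚ)) ^ (2 * s) *
      ((DserK : PowerSeries (RatFunc ℚ)) : LaurentSeries (RatFunc ℚ)))).coeff (-1)



namespace Aux

/-- degree bound predicate on `ℚ(t)`: zero or total degree `≤ d`. -/
def DegLe (d : ℤ) (x : RatFunc ℚ) : Prop := x = 0 ∨ x.intDegree ≤ d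

lemma DegLe.zero (d : ℤ) : DegLe d (0 : RatFunc ℚ) := Or.inl rfl

lemma DegLe.of_le {d e : ℤ} {x : RatFunc ℚ} (h : DegLe d x) (hde : d ≤ e) : DegLe e x :=
  h.imp id fun h' => h'.trans hde

lemma DegLe.add {d : ℤ} {x y : RatFunc ℚ} (hx : DegLe d x) (hy : DegLe d y) :
    DegLe d (x + y) := by
  rcases hx with rfl | hx
  · simpa using hy
  rcases hy with rfl | hy
  · rw [add_zero]; exact Or.inr hx
  by_cases hy0 : y = 0
  · rw [hy0, add_zero]; exact Or.inr hx
  by_cases h : x + y = 0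
  · exact Or.inl h
  · exact Or.inr ((RatFunc.intDegree_add_le hy0 h).trans (max_le hx hy))

lemma DegLe.neg {d : ℤ} {x : RatFunc ℚ} (hx : DegLe d x) : DegLe d (-x) := by
  rcases hx with rfl | hx
  · simpa using DegLe.zero d
  · right; rwa [RatFunc.intDegree_neg]

lemma DegLe.sub {d : ℤ} {x y : RatFunc ℚ} (hx : DegLe d x) (hy : DegLe d y) :
    DegLe d (x - y) := by
  rw [sub_eq_add_neg]; exact hx.add hy.neg

lemma DegLe.mul {a b : ℤ} {x y : RatFunc ℚ} (hx : DegLe a x) (hy : DegLe b y) :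
    DegLe (a + b) (x * y) := by
  rcases hx with rfl | hx
  · simpa using DegLe.zero _
  rcases hy with rfl | hy
  · simpa using DegLe.zero _
  by_cases h0x : x = 0
  · simp [h0x, DegLe.zero]
  by_cases h0y : y = 0
  · simp [h0y, DegLe.zero]
  · right
    rw [RatFunc.intDegree_mul h0x h0y]
    exact add_le_add hx hy

lemma DegLe.sum {d : ℤ} {s : Finset ℕ} {f : ℕ → RatFunc ℚ}
    (h : ∀ i ∈ s, DegLe d (f i)) : DegLe d (∑ i ∈ s, f i) := by
  classical
  induction s using Finset.induction_on with
  | empty => simpa using DegLe.zero d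
  | insert _ _ hx ih =>
      rw [Finset.sum_insert hx]
      exact (h _ (Finset.mem_insert_self _ _)).add
        (ih fun i hi => h i (Finset.mem_insert_of_mem hi))

lemma intDegree_inv {x : RatFunc ℚ} (hx : x ≠ 0) : x⁻¹.intDegree = -x.intDegree := by
  have h1 : x * x⁻¹ = 1 := mul_inv_cancel₀ hx
  have := RatFunc.intDegree_mul hx (inv_ne_zero hx)
  rw [h1, RatFunc.intDegree_one] at this
  omega

lemma intDegree_zpow (z : ℤ) : ((RatFunc.X : RatFunc ℚ) ^ z).intDegree = z := by
  induction z using Int.induction_on with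
  | zero => simp [RatFunc.intDegree_one]
  | succ n ih =>
      rw [zpow_add₀ RatFunc.X_ne_zero, zpow_one,
        RatFunc.intDegree_mul (zpow_ne_zero _ RatFunc.X_ne_zero) RatFunc.X_ne_zero, ih,
        RatFunc.intDegree_X]
  | pred n ih =>
      rw [sub_eq_add_neg, zpow_add₀ RatFunc.X_ne_zero,
        RatFunc.intDegree_mul (zpow_ne_zero _ RatFunc.X_ne_zero)
          (zpow_ne_zero _ RatFunc.X_ne_zero), ih, zpow_neg, zpow_one, intDegree_inv
          RatFunc.X_ne_zero, RatFunc.intDegree_X]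

/-- the monomial `q · t^z` in `ℚ(t)` -/
noncomputable def mono (q : ℚ) (z : ℤ) : RatFunc ℚ := RatFunc.C q * RatFunc.X ^ z

lemma C_eq_zero_iff {q : ℚ} : RatFunc.C q = 0 ↔ q = 0 := map_eq_zero _

lemma mono_eq_zero_iff {q : ℚ} {z : ℤ} : mono q z = 0 ↔ q = 0 := by
  rw [mono, mul_eq_zero, C_eq_zero_iff]
  simp [zpow_ne_zero z (RatFunc.X_ne_zero (K := ℚ))]

lemma mono_zero (z : ℤ) : mono 0 z = 0 := by simp [mono]

lemma intDegree_mono {q : ℚ} (hq : q ≠ 0) (z : ℤ) : (mono q z).intDegree = z := by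
  rw [mono, RatFunc.intDegree_mul (C_eq_zero_iff.not.mpr hq)
    (zpow_ne_zero _ RatFunc.X_ne_zero), RatFunc.intDegree_C, intDegree_zpow, zero_add]

lemma degLe_mono (q : ℚ) (z : ℤ) : DegLe z (mono q z) := by
  by_cases hq : q = 0
  · subst hq; rw [mono_zero]; exact DegLe.zero z
  · exact Or.inr (le_of_eq (intDegree_mono hq z))

lemma mono_mul (q q' : ℚ) (z z' : ℤ) : mono q z * mono q' z' = mono (q * q') (z + z') := by
  rw [mono, mono, mono, map_mul, zpow_add₀ (RatFunc.X_ne_zero (K := ℚ))]; ring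

lemma mono_add (q q' : ℚ) (z : ℤ) : mono q z + mono q' z = mono (q + q') z := by
  rw [mono, mono, mono, map_add]; ring

lemma degLe_C (q : ℚ) : DegLe 0 (RatFunc.C q) := by
  by_cases hq : q = 0
  · simp [hq, DegLe.zero]
  · exact Or.inr (le_of_eq (RatFunc.intDegree_C q))

lemma degLe_one : DegLe 0 (1 : RatFunc ℚ) := Or.inr (le_of_eq RatFunc.intDegree_one)



abbrev K := RatFunc ℚ

/-- `aq j = ((1/2)^j - (-1/2)^j)/j!` -/
def aq (j : ℕ) : ℚ := ((1/2 : ℚ)^j - (-(1/2) : ℚ)^j) / (j.factorial : ℚ)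

/-- `bq j = 2((1/2)^j + (-1/2)^j)/j!` -/
def bq (j : ℕ) : ℚ := 2 * ((1/2 : ℚ)^j + (-(1/2) : ℚ)^j) / (j.factorial : ℚ)

lemma aq_even (m : ℕ) : aq (2*m) = 0 := by
  simp [aq, neg_pow, pow_mul]

lemma bq_odd (m : ℕ) : bq (2*m+1) = 0 := by
  simp [bq, neg_pow, pow_mul, pow_succ]

lemma sq_expand (c : K) :
    (1 + PowerSeries.C (R := K) c * X) ^ 2 =
      1 + PowerSeries.C (R := K) (2*c) * X + PowerSeries.C (R := K) (c^2) * X^2 := by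
  rw [map_mul, map_pow, map_ofNat]
  ring

lemma coeff_helper₂ (f : K⟦X⟧) (c : K) (n : ℕ) :
    coeff (R := K) (n+2) (f * (1 + PowerSeries.C (R := K) c * X)^2) =
      coeff (R := K) (n+2) f + 2*c*coeff (R := K) (n+1) f + c^2 * coeff (R := K) n f := by
  rw [sq_expand]
  have : f * (1 + PowerSeries.C (R := K) (2*c) * X + PowerSeries.C (R := K) (c^2) * X^2) =
      f + PowerSeries.C (R := K) (2*c) * (f * X) + PowerSeries.C (R := K) (c^2) * ((f * X) * X) := by
    ring
  rw [this]
  simp only [map_add, coeff_C_mul, coeff_succ_mul_X]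

lemma coeff_helper₁ (f : K⟦X⟧) (c : K) :
    coeff (R := K) 1 (f * (1 + PowerSeries.C (R := K) c * X)^2) =
      coeff (R := K) 1 f + 2*c*coeff (R := K) 0 f := by
  rw [sq_expand]
  have : f * (1 + PowerSeries.C (R := K) (2*c) * X + PowerSeries.C (R := K) (c^2) * X^2) =
      f + PowerSeries.C (R := K) (2*c) * (f * X) + PowerSeries.C (R := K) (c^2) * ((f * X) * X) := by
    ring
  rw [this]
  have h1 : coeff (R := K) 1 (f * X) = coeff (R := K) 0 f := coeff_succ_mul_X 0 f
  have h2 : coeff (R := K) 1 ((f * X) * X) = coeff (R := K) 0 (f * X) := coeff_succ_mul_X 0 (f * X)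
  have h3 : coeff (R := K) 0 (f * X) = 0 := by
    rw [coeff_zero_eq_constantCoeff, map_mul, constantCoeff_X, mul_zero]
  simp only [map_add, coeff_C_mul, h1, h2, h3, mul_zero, add_zero]

lemma coeff_helper₀ (f : K⟦X⟧) (c : K) :
    coeff (R := K) 0 (f * (1 + PowerSeries.C (R := K) c * X)^2) = coeff (R := K) 0 f := by
  simp [coeff_zero_eq_constantCoeff, map_mul, map_pow]

lemma C_eq_zero_iff' {q : ℚ} : RatFunc.C q = 0 ↔ q = 0 := map_eq_zero _

lemma two_ne_zero' : (2 : K) ≠ 0 := by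
  rw [show (2:K) = RatFunc.C 2 from (map_ofNat _ 2).symm]
  intro h
  rw [C_eq_zero_iff'] at h
  norm_num at h

lemma coeff_rescale_exp (c : ℚ) (n : ℕ) :
    coeff (R := K) n (rescale (algebraMap ℚ K c) (exp K)) = algebraMap ℚ K (c^n / n.factorial) := by
  rw [coeff_rescale, coeff_exp, ← map_pow, ← map_mul]
  congr 1
  ring

lemma neg_form (c : K) : (1 - PowerSeries.C (R := K) c * X) = 1 + PowerSeries.C (R := K) (-c) * X := by
  rw [map_neg]; ring

lemma coeff_D_zero : coeff (R := K) 0 DserK = 0 := by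
  rw [DserK, map_sub, neg_form, coeff_helper₀, coeff_helper₀, coeff_rescale_exp,
    coeff_rescale_exp, ← map_sub]
  norm_num

lemma coeff_D_one : coeff (R := K) 1 DserK = 1 + 4 * RatFunc.X := by
  rw [DserK, map_sub, neg_form, coeff_helper₁, coeff_helper₁, coeff_rescale_exp,
    coeff_rescale_exp, coeff_rescale_exp, coeff_rescale_exp]
  simp only [map_div₀, map_sub, map_add, map_mul, map_pow, map_neg, map_natCast, map_ofNat,
    map_one]
  simp [Nat.factorial]
  linear_combination mul_inv_cancel₀ two_ne_zero'

lemma algebraMap_eq_C' : algebraMap ℚ K = RatFunc.C := RingHom.ext_rat _ _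

lemma coeff_D_add_two (n : ℕ) :
    coeff (R := K) (n+2) DserK =
      RatFunc.C (aq (n+2)) + RatFunc.C (bq (n+1)) * RatFunc.X +
        RatFunc.C (aq n) * RatFunc.X^2 := by
  rw [DserK, map_sub, neg_form, coeff_helper₂, coeff_helper₂, coeff_rescale_exp,
    coeff_rescale_exp, coeff_rescale_exp, coeff_rescale_exp, coeff_rescale_exp,
    coeff_rescale_exp, aq, bq, aq, algebraMap_eq_C']
  simp only [map_div₀, map_sub, map_add, map_mul, map_pow, map_neg, map_natCast, map_ofNat,
    map_one]
  ring


noncomputable def Eser : PowerSeries K := PowerSeries.mk fun n => coeff (R := K) (n+1) DserK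

lemma coeff_Eser (n : ℕ) : coeff (R := K) n Eser = coeff (R := K) (n+1) DserK := coeff_mk n _

/-- `ε = 1 + 4t`, the constant coefficient of `E`. -/
noncomputable def eps : K := 1 + 4 * RatFunc.X

lemma eps_eq_poly : eps = algebraMap (Polynomial ℚ) K (1 + 4 * Polynomial.X) := by
  rw [map_add, map_one, map_mul, map_ofNat, RatFunc.algebraMap_X, eps]

lemma natDegree_one_add_four_X : (1 + 4 * Polynomial.X : Polynomial ℚ).natDegree = 1 := by
  compute_degree!

lemma one_add_four_X_ne : (1 + 4 * Polynomial.X : Polynomial ℚ) ≠ 0 := by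
  intro h
  have := natDegree_one_add_four_X
  rw [h] at this
  simp at this

lemma eps_ne_zero : eps ≠ 0 := by
  rw [eps_eq_poly]
  intro h
  exact one_add_four_X_ne (IsFractionRing.injective (Polynomial ℚ) K (by rwa [map_zero]))

lemma intDegree_eps : eps.intDegree = 1 := by
  rw [eps_eq_poly, RatFunc.intDegree_polynomial, natDegree_one_add_four_X]
  norm_num

lemma degLe_eps : DegLe 1 eps := Or.inr (le_of_eq intDegree_eps)

lemma e_zero : coeff (R := K) 0 Eser = eps := by
  rw [coeff_Eser, coeff_D_one, eps]

lemma constantCoeff_Eser : constantCoeff (R := K) Eser = eps := by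
  rw [← coeff_zero_eq_constantCoeff, e_zero]

lemma constantCoeff_Eser_ne : constantCoeff (R := K) Eser ≠ 0 := by
  rw [constantCoeff_Eser]; exact eps_ne_zero

lemma D_eq_X_mul_E : DserK = X * Eser := by
  ext n
  cases n with
  | zero => rw [coeff_D_zero, coeff_zero_eq_constantCoeff, map_mul, constantCoeff_X, zero_mul]
  | succ n => rw [coeff_succ_X_mul, coeff_Eser]

lemma e_odd (i : ℕ) : coeff (R := K) (2*i+1) Eser = 0 := by
  rw [coeff_Eser, show 2*i+1+1 = 2*i+2 from rfl, coeff_D_add_two,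
    show 2*i+2 = 2*(i+1) from by ring, aq_even,
    show 2*i+1 = 2*i+1 from rfl, bq_odd, aq_even]
  simp

lemma e_even (i : ℕ) : coeff (R := K) (2*i+2) Eser =
    RatFunc.C (aq (2*i+3)) + RatFunc.C (bq (2*i+2)) * RatFunc.X +
      RatFunc.C (aq (2*i+1)) * RatFunc.X^2 := by
  rw [coeff_Eser, show 2*i+2+1 = (2*i+1)+2 from by ring, coeff_D_add_two,
    show 2*i+1+2 = 2*i+3 from by ring, show 2*i+1+1 = 2*i+2 from by ring]

lemma degLe_X : DegLe 1 (RatFunc.X : K) := Or.inr (le_of_eq RatFunc.intDegree_X)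

lemma degLe_e_even (i : ℕ) : DegLe 2 (coeff (R := K) (2*i+2) Eser) := by
  rw [e_even]
  refine DegLe.add (DegLe.add ?_ ?_) ?_
  · exact (degLe_C _).of_le (by norm_num)
  · exact ((degLe_C _).mul degLe_X).of_le (by norm_num)
  · have : DegLe 2 (RatFunc.X^2 : K) := by
      have := degLe_X.mul degLe_X
      rwa [← pow_two] at this
    simpa using (degLe_C (aq (2*i+1))).mul this

lemma aq_one : aq 1 = 1 := by norm_num [aq, Nat.factorial]
lemma aq_three : aq 3 = 1/24 := by norm_num [aq, Nat.factorial]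
lemma bq_two : bq 2 = 1/2 := by norm_num [bq, Nat.factorial]

lemma e_two : coeff (R := K) 2 Eser =
    RatFunc.C (1/24) + RatFunc.C (1/2) * RatFunc.X + RatFunc.X^2 := by
  have h := e_even 0
  norm_num [aq_one, aq_three, bq_two, map_one] at h
  rw [show (2:ℕ) = 2*0+2 from rfl, h]
  norm_num


lemma E_mul_inv : Eser * Eser⁻¹ = 1 :=
  PowerSeries.mul_inv_cancel _ constantCoeff_Eser_ne

lemma u_rec (n : ℕ) :
    (∑ j ∈ Finset.range (n+1), coeff (R := K) j Eser * coeff (R := K) (n-j) Eser⁻¹) =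
      if n = 0 then 1 else 0 := by
  have h := congrArg (coeff (R := K) n) E_mul_inv
  rw [coeff_mul, Finset.Nat.sum_antidiagonal_eq_sum_range_succ_mk] at h
  simpa [coeff_one] using h

lemma sum_range_two_mul (m : ℕ) (g : ℕ → K) :
    ∑ j ∈ Finset.range (2*m), g j = ∑ i ∈ Finset.range m, (g (2*i) + g (2*i+1)) := by
  induction m with
  | zero => simp
  | succ p ih =>
      rw [show 2*(p+1) = (2*p)+1+1 from by ring, Finset.sum_range_succ, Finset.sum_range_succ,
        ih, Finset.sum_range_succ]
      ring

lemma u_odd (m : ℕ) : coeff (R := K) (2*m+1) Eser⁻¹ = 0 := by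
  induction m using Nat.strong_induction_on with
  | _ m ih =>
    have h := u_rec (2*m+1)
    rw [if_neg (by omega), Finset.sum_range_succ'] at h
    have hz : ∑ j ∈ Finset.range (2*m+1),
        coeff (R := K) (j+1) Eser * coeff (R := K) (2*m+1-(j+1)) Eser⁻¹ = 0 := by
      refine Finset.sum_eq_zero fun j hj => ?_
      rcases Nat.even_or_odd j with ⟨i, hi⟩ | ⟨i, hi⟩
      · rw [show j+1 = 2*i+1 from by omega, e_odd, zero_mul]
      · rw [Finset.mem_range] at hj
        rw [show 2*m+1-(j+1) = 2*(m-1-i)+1 from by omega, ih (m-1-i) (by omega), mul_zero]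
    rw [hz, zero_add, Nat.sub_zero, e_zero] at h
    rcases mul_eq_zero.mp h with h' | h'
    · exact absurd h' eps_ne_zero
    · exact h'

lemma u_even_rec (m : ℕ) :
    eps * coeff (R := K) (2*(m+1)) Eser⁻¹ =
      -(∑ i ∈ Finset.range m, coeff (R := K) (2*i+4) Eser * coeff (R := K) (2*(m-1-i)) Eser⁻¹)
        - coeff (R := K) 2 Eser * coeff (R := K) (2*m) Eser⁻¹ := by
  have h := u_rec (2*(m+1))
  rw [if_neg (by omega), Finset.sum_range_succ'] at h
  rw [show 2*(m+1) = 2*(m+1) from rfl] at h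
  -- h : ∑ j ∈ range (2*(m+1)), e (j+1) * u (2*(m+1) - (j+1)) + e 0 * u (2*(m+1)) = 0
  rw [sum_range_two_mul] at h
  have hcong : ∀ i ∈ Finset.range (m+1),
      (coeff (R := K) (2*i+1) Eser * coeff (R := K) (2*(m+1)-(2*i+1)) Eser⁻¹ +
        coeff (R := K) (2*i+1+1) Eser * coeff (R := K) (2*(m+1)-(2*i+1+1)) Eser⁻¹) =
      coeff (R := K) (2*i+2) Eser * coeff (R := K) (2*(m-i)) Eser⁻¹ := by
    intro i hi
    rw [Finset.mem_range] at hi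
    rw [e_odd, zero_mul, zero_add, show 2*i+1+1 = 2*i+2 from rfl,
      show 2*(m+1)-(2*i+2) = 2*(m-i) from by omega]
  rw [Finset.sum_congr rfl hcong, Finset.sum_range_succ', Nat.sub_zero, e_zero] at h
  -- h : ∑ i ∈ range m, e (2*(i+1)+2) * u (2*(m-(i+1))) + e 2 * u (2*m) + eps * u (2*(m+1)) = 0
  have hcong2 : ∀ i ∈ Finset.range m,
      coeff (R := K) (2*(i+1)+2) Eser * coeff (R := K) (2*(m-(i+1))) Eser⁻¹ =
      coeff (R := K) (2*i+4) Eser * coeff (R := K) (2*(m-1-i)) Eser⁻¹ := by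
    intro i _
    rw [show 2*(i+1)+2 = 2*i+4 from by ring, show m-(i+1) = m-1-i from by omega]
  rw [Finset.sum_congr rfl hcong2] at h
  have h2 : (2:ℕ)*0+2 = 2 := rfl
  rw [h2, Nat.sub_zero] at h
  linear_combination h


/-- coefficient of the leading monomial of `u_{2m}` -/
def lq (m : ℕ) : ℚ := (-1)^m * (4:ℚ)^(-(m:ℤ)-1)

/-- leading monomial of `u_{2m}`: `(-1)^m 4^{-m-1} t^{m-1}` -/
noncomputable def Lmon (m : ℕ) : K := mono (lq m) ((m:ℤ)-1)

lemma four_ne : (4:ℚ) ≠ 0 := by norm_num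

lemma lq_succ (p : ℕ) : lq p + 4 * lq (p+1) = 0 := by
  have h4 : (4:ℚ) ^ (-((p:ℤ)+1)-1) * 4 = 4 ^ (-(p:ℤ)-1) := by
    rw [← zpow_add_one₀ four_ne]
    congr 1
    omega
  rw [lq, lq, pow_succ]
  push_cast
  linear_combination (-(-1:ℚ)^p) * h4

lemma degLe_Lmon (m : ℕ) : DegLe ((m:ℤ)-1) (Lmon m) := degLe_mono _ _

lemma degLe_of_eps_mul {d : ℤ} {x : K} (h : DegLe (d+1) (eps * x)) : DegLe d x := by
  by_cases hx : x = 0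
  · exact Or.inl hx
  rcases h with h | h
  · exact absurd (by rw [mul_eq_zero] at h; tauto) eps_ne_zero
  · right
    rw [RatFunc.intDegree_mul eps_ne_zero hx, intDegree_eps] at h
    omega

lemma X_pow_two : (RatFunc.X : K)^2 = mono 1 2 := by
  rw [mono, map_one, one_mul, show ((2:ℤ)) = ((2:ℕ):ℤ) from rfl, zpow_natCast]

lemma X_eq_mono : (RatFunc.X : K) = mono 1 1 := by
  rw [mono, map_one, one_mul, zpow_one]

lemma Lmon_cancel (p : ℕ) : RatFunc.X^2 * Lmon p + 4 * RatFunc.X * Lmon (p+1) = 0 := by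
  have h4 : (4:K) = RatFunc.C 4 := (map_ofNat _ 4).symm
  rw [Lmon, Lmon, X_pow_two, X_eq_mono, h4, show RatFunc.C (4:ℚ) = mono 4 0 from by
    rw [mono, zpow_zero, mul_one]]
  rw [mono_mul, mono_mul, mono_mul]
  have he : (2 + ((p:ℤ)-1)) = (0 + 1 + ((((p:ℕ)+1:ℕ):ℤ)-1)) := by push_cast; ring
  rw [he, mono_add]
  have : (1 * lq p + 4 * 1 * lq (p+1)) = 0 := by
    have := lq_succ p
    linarith
  rw [this, mono_zero]

lemma u_zero : coeff (R := K) 0 Eser⁻¹ = eps⁻¹ := by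
  rw [coeff_zero_eq_constantCoeff, PowerSeries.constantCoeff_inv, constantCoeff_Eser]

lemma CX_ne : (RatFunc.C (4:ℚ) * RatFunc.X : K) ≠ 0 :=
  mul_ne_zero (by rw [Ne, C_eq_zero_iff']; norm_num) RatFunc.X_ne_zero

lemma u_approx_zero : DegLe ((0:ℤ)-2) (coeff (R := K) (2*0) Eser⁻¹ - Lmon 0) := by
  have hL : Lmon 0 = (RatFunc.C (4:ℚ) * RatFunc.X)⁻¹ := by
    rw [Lmon, mono, mul_inv, ← map_inv₀]
    norm_num [lq, zpow_neg, zpow_one]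
  have key : coeff (R := K) (2*0) Eser⁻¹ - Lmon 0 = -((RatFunc.C (4:ℚ) * RatFunc.X * eps)⁻¹) := by
    rw [show (2*0 : ℕ) = 0 from rfl, u_zero, hL,
      inv_sub_inv eps_ne_zero CX_ne,
      show RatFunc.C (4:ℚ) * RatFunc.X - eps = -1 from by
        rw [eps, (map_ofNat RatFunc.C 4 : RatFunc.C (4:ℚ) = 4)]; ring,
      mul_comm eps, neg_div, one_div]
  rw [key]
  refine DegLe.neg (Or.inr ?_)
  rw [intDegree_inv (mul_ne_zero CX_ne eps_ne_zero),
    RatFunc.intDegree_mul CX_ne eps_ne_zero,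
    RatFunc.intDegree_mul (by rw [Ne, C_eq_zero_iff']; norm_num) RatFunc.X_ne_zero,
    RatFunc.intDegree_C, RatFunc.intDegree_X, intDegree_eps]
  norm_num

lemma u_approx : ∀ m : ℕ, DegLe ((m:ℤ)-2) (coeff (R := K) (2*m) Eser⁻¹ - Lmon m) := by
  intro m
  induction m using Nat.strong_induction_on with
  | _ m ih =>
    match m with
    | 0 => exact u_approx_zero
    | (p+1) =>
      have hle : ∀ q, q < p+1 → DegLe ((q:ℤ)-1) (coeff (R := K) (2*q) Eser⁻¹) := by
        intro q hq
        have h1 := ((ih q hq).of_le (by omega : ((q:ℤ)-2) ≤ (q:ℤ)-1)).add (degLe_Lmon q)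
        rwa [sub_add_cancel] at h1
      -- key algebraic identity
      have he2 := e_two
      have hrec := u_even_rec p
      set u2m := coeff (R := K) (2*(p+1)) Eser⁻¹ with hu2m
      set u2p := coeff (R := K) (2*p) Eser⁻¹ with hu2p
      have key : eps * (u2m - Lmon (p+1)) =
          -((RatFunc.C (1/24) + RatFunc.C (1/2) * RatFunc.X) * (u2p - Lmon p))
          - ((RatFunc.C (1/24) + RatFunc.C (1/2) * RatFunc.X) * Lmon p
              + RatFunc.X^2 * (u2p - Lmon p) + Lmon (p+1))
          - (∑ i ∈ Finset.range p, coeff (R := K) (2*i+4) Eser * coeff (R := K) (2*(p-1-i)) Eser⁻¹) := by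
        have hc := Lmon_cancel p
        rw [he2] at hrec
        rw [eps] at hrec ⊢
        linear_combination hrec - hc
      rw [show ((((p:ℕ)+1:ℕ):ℤ)-2) = (((p:ℕ):ℤ)-1) from by push_cast; ring]
      refine degLe_of_eps_mul (d := (p:ℤ)-1) ?_
      rw [show ((p:ℤ)-1+1) = (p:ℤ) from by ring, key]
      refine DegLe.sub (DegLe.sub ?_ ?_) ?_
      · refine DegLe.neg ?_
        have h1 : DegLe 1 (RatFunc.C (1/24) + RatFunc.C (1/2) * RatFunc.X) :=
          ((degLe_C _).of_le (by norm_num)).add ((degLe_C _).mul degLe_X)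
        have := h1.mul (ih p (by omega))
        exact this.of_le (by omega)
      · refine DegLe.add (DegLe.add ?_ ?_) ?_
        · have h1 : DegLe 1 (RatFunc.C (1/24) + RatFunc.C (1/2) * RatFunc.X) :=
            ((degLe_C _).of_le (by norm_num)).add ((degLe_C _).mul degLe_X)
          exact (h1.mul (degLe_Lmon p)).of_le (by omega)
        · have h2 : DegLe 2 ((RatFunc.X:K)^2) := by
            rw [X_pow_two]; exact degLe_mono 1 2
          exact (h2.mul (ih p (by omega))).of_le (by omega)
        · exact (degLe_Lmon (p+1)).of_le (by push_cast; omega)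
      · refine DegLe.sum fun i hi => ?_
        rw [Finset.mem_range] at hi
        have hE : DegLe 2 (coeff (R := K) (2*i+4) Eser) := by
          have := degLe_e_even (i+1)
          rwa [show 2*(i+1)+2 = 2*i+4 from by ring] at this
        have hu : DegLe (((p-1-i:ℕ):ℤ)-1) (coeff (R := K) (2*(p-1-i)) Eser⁻¹) :=
          hle (p-1-i) (by omega)
        exact (hE.mul hu).of_le (by omega)

lemma u_le (m : ℕ) : DegLe ((m:ℤ)-1) (coeff (R := K) (2*m) Eser⁻¹) := by
  have h1 := ((u_approx m).of_le (by omega : ((m:ℤ)-2) ≤ (m:ℤ)-1)).add (degLe_Lmon m)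
  rwa [sub_add_cancel] at h1


lemma coeE_ne : ((Eser : K⟦X⟧) : LaurentSeries K) ≠ 0 := by
  have hEU : (Eser : LaurentSeries K) * ((Eser⁻¹ : K⟦X⟧) : LaurentSeries K) = 1 := by
    rw [← PowerSeries.coe_mul, E_mul_inv, PowerSeries.coe_one]
  exact left_ne_zero_of_mul_eq_one hEU

lemma single_ne (z : ℤ) : (HahnSeries.single z (1:K)) ≠ 0 :=
  HahnSeries.single_ne_zero one_ne_zero

lemma single_one_mul (z w : ℤ) :
    (HahnSeries.single z (1:K)) * HahnSeries.single w 1 = HahnSeries.single (z+w) 1 := by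
  rw [HahnSeries.single_mul_single, one_mul]

lemma single_zero_one' : (HahnSeries.single (0:ℤ) (1:K)) = 1 := rfl

lemma Fres_eq (lam : ℚ) (k s : ℕ) :
    Fres lam k (s : ℤ) = coeff (R := K) (2*s) (Nser lam ^ k * Eser⁻¹) := by
  have hEU : (Eser : LaurentSeries K) * ((Eser⁻¹ : K⟦X⟧) : LaurentSeries K) = 1 := by
    rw [← PowerSeries.coe_mul, E_mul_inv, PowerSeries.coe_one]
  have hXco : ((PowerSeries.X : K⟦X⟧) : LaurentSeries K) = HahnSeries.single (1:ℤ) (1:K) :=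
    PowerSeries.coe_X
  have hD : ((DserK : K⟦X⟧) : LaurentSeries K) =
      HahnSeries.single (1:ℤ) (1:K) * (Eser : LaurentSeries K) := by
    rw [D_eq_X_mul_E, PowerSeries.coe_mul, PowerSeries.coe_X]
  have hσz : (HahnSeries.single (1:ℤ) (1:K)) ^ (2*(s:ℤ)) =
      HahnSeries.single (2*(s:ℤ)) (1:K) := (RatFunc.single_zpow _).symm
  have hden : HahnSeries.single (2*(s:ℤ)) (1:K) *
      (HahnSeries.single (1:ℤ) (1:K) * (Eser : LaurentSeries K)) ≠ 0 :=
    mul_ne_zero (single_ne _) (mul_ne_zero (single_ne _) coeE_ne)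
  have hsingles : HahnSeries.single (-(2*(s:ℤ)+1)) (1:K) *
      (HahnSeries.single (2*(s:ℤ)) (1:K) * HahnSeries.single (1:ℤ) 1) = 1 := by
    rw [single_one_mul, single_one_mul, show (-(2*(s:ℤ)+1) + (2*(s:ℤ)+1)) = 0 from by ring,
      single_zero_one']
  have hmain : (((Nser lam ^ k : K⟦X⟧) : LaurentSeries K)) /
        (((PowerSeries.X : K⟦X⟧) : LaurentSeries K) ^ (2*(s:ℤ)) *
          ((DserK : K⟦X⟧) : LaurentSeries K)) =
      ((Nser lam ^ k * Eser⁻¹ : K⟦X⟧) : LaurentSeries K) *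
        HahnSeries.single (-(2*(s:ℤ)+1)) 1 := by
    rw [hXco, hD, hσz, div_eq_iff hden, PowerSeries.coe_mul]
    rw [show ((Nser lam ^ k : K⟦X⟧) : LaurentSeries K) *
          ((Eser⁻¹ : K⟦X⟧) : LaurentSeries K) *
          HahnSeries.single (-(2*(s:ℤ)+1)) 1 *
          (HahnSeries.single (2*(s:ℤ)) (1:K) *
            (HahnSeries.single (1:ℤ) (1:K) * (Eser : LaurentSeries K))) =
        ((Nser lam ^ k : K⟦X⟧) : LaurentSeries K) *
          ((Eser : LaurentSeries K) * ((Eser⁻¹ : K⟦X⟧) : LaurentSeries K)) *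
          (HahnSeries.single (-(2*(s:ℤ)+1)) (1:K) *
            (HahnSeries.single (2*(s:ℤ)) (1:K) * HahnSeries.single (1:ℤ) 1)) from by ring,
      hEU, hsingles, mul_one, mul_one]
  rw [Fres, hmain, show (-1:ℤ) = 2*(s:ℤ) + (-(2*(s:ℤ)+1)) from by ring,
    HahnSeries.coeff_mul_single_add, mul_one, PowerSeries.coeff_coe,
    if_neg (by omega), show ((2*(s:ℤ)).natAbs) = 2*s from by omega]


noncomputable def nc2 (lam : ℚ) : K := -(RatFunc.X^2 + algebraMap ℚ K lam / 2)
noncomputable def nc4 (lam : ℚ) : K := algebraMap ℚ K lam / 2 * RatFunc.X^2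

lemma halfconst (lam : ℚ) : algebraMap ℚ K lam / 2 = RatFunc.C (lam/2) := by
  rw [algebraMap_eq_C', map_div₀, map_ofNat]

lemma Nser_eq (lam : ℚ) : Nser lam =
    PowerSeries.C (R := K) eps + PowerSeries.C (R := K) (nc2 lam) * X^2 + PowerSeries.C (R := K) (nc4 lam) * X^4 := by
  rw [Nser, eps, nc2, nc4]
  simp only [map_add, map_mul, map_neg, map_one, map_div₀, map_pow, map_ofNat]
  ring

lemma degLe_half (lam : ℚ) : DegLe 0 (algebraMap ℚ K lam / 2) := by
  rw [halfconst]; exact degLe_C _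

lemma degLe_X2 : DegLe 2 ((RatFunc.X:K)^2) := by
  rw [X_pow_two]; exact degLe_mono 1 2

lemma degLe_nc2 (lam : ℚ) : DegLe 2 (nc2 lam) :=
  DegLe.neg (degLe_X2.add ((degLe_half lam).of_le (by norm_num)))

lemma degLe_nc4 (lam : ℚ) : DegLe 2 (nc4 lam) := by
  have h := (degLe_half lam).mul degLe_X2
  rw [nc4]
  simpa using h

lemma coeff_N_mul (lam : ℚ) (G : K⟦X⟧) (n : ℕ) :
    coeff (R := K) n (Nser lam * G) = eps * coeff (R := K) n G
      + nc2 lam * (if 2 ≤ n then coeff (R := K) (n-2) G else 0)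
      + nc4 lam * (if 4 ≤ n then coeff (R := K) (n-4) G else 0) := by
  rw [Nser_eq]
  have hre : (PowerSeries.C (R := K) eps + PowerSeries.C (R := K) (nc2 lam) * X^2
        + PowerSeries.C (R := K) (nc4 lam) * X^4) * G
      = PowerSeries.C (R := K) eps * G + PowerSeries.C (R := K) (nc2 lam) * (X^2 * G)
        + PowerSeries.C (R := K) (nc4 lam) * (X^4 * G) := by ring
  rw [hre, map_add, map_add, coeff_C_mul, coeff_C_mul, coeff_C_mul, coeff_X_pow_mul',
    coeff_X_pow_mul']

/-- leading coefficient of `coeff_{2i}(N^k/ D̃)`. -/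
def rq (k i : ℕ) : ℚ :=
  (-1)^i * (4:ℚ)^((k:ℤ)-(i:ℤ)-1) * ∑ a ∈ Finset.range (i+1), (k.choose a : ℚ)

noncomputable def Rmon (k i : ℕ) : K := mono (rq k i) ((k:ℤ)+(i:ℤ)-1)

lemma degLe_Rmon (k i : ℕ) : DegLe ((k:ℤ)+(i:ℤ)-1) (Rmon k i) := degLe_mono _ _

lemma choose_sum_succ (k n : ℕ) : ∑ a ∈ Finset.range (n+1), ((k+1).choose a : ℚ)
    = ∑ a ∈ Finset.range (n+1), (k.choose a : ℚ) + ∑ a ∈ Finset.range n, (k.choose a : ℚ) := by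
  induction n with
  | zero => simp
  | succ n ih =>
      rw [Finset.sum_range_succ, ih,
        Finset.sum_range_succ (f := fun a => ((k:ℕ).choose a : ℚ)) (n := n+1),
        Finset.sum_range_succ (f := fun a => ((k:ℕ).choose a : ℚ)) (n := n)]
      have hc : (((k+1).choose (n+1) : ℚ)) = (k.choose n : ℚ) + (k.choose (n+1) : ℚ) := by
        rw [Nat.choose_succ_succ]
        push_cast
        ring
      rw [hc]
      ring

lemma rq_zero_succ (k : ℕ) : rq (k+1) 0 = 4 * rq k 0 := by
  rw [rq, rq]
  simp only [zero_add, Finset.sum_range_one, Nat.choose_zero_right, Nat.cast_one, pow_zero,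
    one_mul, mul_one]
  rw [show (((k:ℕ)+1:ℕ):ℤ)-((0:ℕ):ℤ)-1 = ((((k:ℕ):ℤ))-((0:ℕ):ℤ)-1)+1 from by push_cast; ring,
    zpow_add_one₀ four_ne]
  ring

lemma rq_succ (k i : ℕ) : rq (k+1) (i+1) = 4 * rq k (i+1) - rq k i := by
  have h4 : (4:ℚ)^((k:ℤ)-(i:ℤ)-2) * 4 = 4^((k:ℤ)-(i:ℤ)-1) := by
    rw [← zpow_add_one₀ four_ne]; congr 1; ring
  rw [rq, rq, rq, choose_sum_succ]
  push_cast
  rw [show ((k:ℤ)+1-((i:ℤ)+1)-1) = (k:ℤ)-(i:ℤ)-1 from by ring,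
      show ((k:ℤ)-((i:ℤ)+1)-1) = (k:ℤ)-(i:ℤ)-2 from by ring, pow_succ]
  linear_combination ((-1:ℚ)^i * ∑ a ∈ Finset.range (i+1+1), ((k.choose a : ℚ))) * h4

lemma fourX : (4:K) * RatFunc.X = mono 4 1 := by
  rw [mono, zpow_one, show RatFunc.C (4:ℚ) = (4:K) from map_ofNat _ 4]

lemma mono_sub (q q' : ℚ) (z : ℤ) : mono q z - mono q' z = mono (q - q') z := by
  rw [mono, mono, mono, map_sub]; ring

lemma mono_congr {q q' : ℚ} {z z' : ℤ} (hq : q = q') (hz : z = z') : mono q z = mono q' z' := by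
  rw [hq, hz]

lemma Rmon_shift (k i : ℕ) :
    (4:K) * RatFunc.X * Rmon k i = mono (4 * rq k i) ((k:ℤ)+(i:ℤ)) := by
  rw [fourX, Rmon, mono_mul]
  exact mono_congr rfl (by ring)

lemma X2_shift (k i : ℕ) :
    (RatFunc.X:K)^2 * Rmon k i = mono (rq k i) ((k:ℤ)+(i:ℤ)+1) := by
  rw [X_pow_two, Rmon, mono_mul]
  exact mono_congr (one_mul _) (by ring)

lemma mono_combine2 (a b : ℚ) (z z1 z2 : ℤ) (h : a - b = 0) (h1 : z1 = z) (h2 : z2 = z) :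
    mono a z1 - mono b z2 = 0 := by
  rw [h1, h2, mono_sub, h, mono_zero]

lemma mono_combine3 (a b c : ℚ) (z z1 z2 z3 : ℤ) (h : a - b - c = 0)
    (h1 : z1 = z) (h2 : z2 = z) (h3 : z3 = z) :
    mono a z1 - mono b z2 - mono c z3 = 0 := by
  rw [h1, h2, h3, mono_sub, mono_sub, h, mono_zero]

lemma Rmon_id0 (k : ℕ) : (4:K) * RatFunc.X * Rmon k 0 - Rmon (k+1) 0 = 0 := by
  rw [Rmon_shift, Rmon]
  exact mono_combine2 _ _ ((k:ℤ)) _ _ (by rw [rq_zero_succ]; ring)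
    (by push_cast; ring) (by push_cast; ring)

lemma Rmon_id (k i : ℕ) :
    (4:K) * RatFunc.X * Rmon k (i+1) - (RatFunc.X:K)^2 * Rmon k i - Rmon (k+1) (i+1) = 0 := by
  rw [Rmon_shift, X2_shift, Rmon]
  exact mono_combine3 _ _ _ ((k:ℤ)+(i:ℤ)+1) _ _ _ (by rw [rq_succ]; ring)
    (by push_cast; ring) (by push_cast; ring) (by push_cast; ring)

lemma sum_choose_zero (i : ℕ) : ∑ a ∈ Finset.range (i+1), ((0:ℕ).choose a : ℚ) = 1 := by
  induction i with
  | zero => simp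
  | succ i ih => rw [Finset.sum_range_succ, ih, Nat.choose_zero_succ]; simp

lemma Rmon_zero (i : ℕ) : Rmon 0 i = Lmon i := by
  rw [Rmon, Lmon]
  refine mono_congr ?_ (by push_cast; ring)
  rw [rq, lq, sum_choose_zero, mul_one, show (((0:ℕ):ℤ)-(i:ℤ)-1) = (-(i:ℤ)-1) from by
    push_cast; ring]

lemma prod_approx (lam : ℚ) :
    ∀ k i : ℕ, DegLe ((k:ℤ)+(i:ℤ)-2)
      (coeff (R := K) (2*i) (Nser lam ^ k * Eser⁻¹) - Rmon k i) := by
  intro k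
  induction k with
  | zero =>
      intro i
      rw [pow_zero, one_mul, Rmon_zero]
      exact (u_approx i).of_le (by push_cast; omega)
  | succ k ih =>
      have hRle : ∀ i : ℕ, DegLe ((k:ℤ)+(i:ℤ)-1) (coeff (R := K) (2*i) (Nser lam ^ k * Eser⁻¹)) := by
        intro i
        have h := ((ih i).of_le (by omega : (k:ℤ)+(i:ℤ)-2 ≤ (k:ℤ)+(i:ℤ)-1)).add
          (degLe_Rmon k i)
        rwa [sub_add_cancel] at h
      have hre : Nser lam ^ (k+1) * Eser⁻¹ = Nser lam * (Nser lam ^ k * Eser⁻¹) := by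
        rw [pow_succ]; ring
      intro i
      rw [hre, coeff_N_mul]
      match i with
      | 0 =>
          rw [if_neg (by omega), if_neg (by omega)]
          have key : eps * coeff (R := K) (2*0) (Nser lam ^ k * Eser⁻¹) + nc2 lam * 0 + nc4 lam * 0
              - Rmon (k+1) 0 =
              eps * (coeff (R := K) (2*0) (Nser lam ^ k * Eser⁻¹) - Rmon k 0) + Rmon k 0
              + ((4:K) * RatFunc.X * Rmon k 0 - Rmon (k+1) 0) := by
            rw [eps]; ring
          rw [key, Rmon_id0, add_zero]
          refine DegLe.add ((degLe_eps.mul (ih 0)).of_le (by push_cast; omega)) ?_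
          exact (degLe_Rmon k 0).of_le (by push_cast; omega)
      | 1 =>
          rw [if_pos (by omega), if_neg (by omega), show 2*1-2 = 2*0 from rfl]
          have key : eps * coeff (R := K) (2*1) (Nser lam ^ k * Eser⁻¹)
                + nc2 lam * coeff (R := K) (2*0) (Nser lam ^ k * Eser⁻¹) + nc4 lam * 0
                - Rmon (k+1) 1 =
              eps * (coeff (R := K) (2*1) (Nser lam ^ k * Eser⁻¹) - Rmon k 1)
              + nc2 lam * (coeff (R := K) (2*0) (Nser lam ^ k * Eser⁻¹) - Rmon k 0)
              + Rmon k 1 + (-(algebraMap ℚ K lam / 2)) * Rmon k 0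
              + ((4:K) * RatFunc.X * Rmon k 1 - (RatFunc.X:K)^2 * Rmon k 0 - Rmon (k+1) 1) := by
            rw [eps, nc2]; ring
          have h01 : (4:K) * RatFunc.X * Rmon k 1 - (RatFunc.X:K)^2 * Rmon k 0 - Rmon (k+1) 1 = 0 :=
            Rmon_id k 0
          rw [key, h01, add_zero]
          refine DegLe.add (DegLe.add (DegLe.add ?_ ?_) ?_) ?_
          · exact (degLe_eps.mul (ih 1)).of_le (by push_cast; omega)
          · exact ((degLe_nc2 lam).mul (ih 0)).of_le (by push_cast; omega)
          · exact (degLe_Rmon k 1).of_le (by push_cast; omega)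
          · exact ((DegLe.neg (degLe_half lam)).mul (degLe_Rmon k 0)).of_le
              (by push_cast; omega)
      | (j+2) =>
          rw [if_pos (by omega), if_pos (by omega),
            show 2*(j+2)-2 = 2*(j+1) from by omega, show 2*(j+2)-4 = 2*j from by omega]
          have key : eps * coeff (R := K) (2*(j+2)) (Nser lam ^ k * Eser⁻¹)
                + nc2 lam * coeff (R := K) (2*(j+1)) (Nser lam ^ k * Eser⁻¹)
                + nc4 lam * coeff (R := K) (2*j) (Nser lam ^ k * Eser⁻¹) - Rmon (k+1) (j+2) =
              eps * (coeff (R := K) (2*(j+2)) (Nser lam ^ k * Eser⁻¹) - Rmon k (j+2))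
              + nc2 lam * (coeff (R := K) (2*(j+1)) (Nser lam ^ k * Eser⁻¹) - Rmon k (j+1))
              + nc4 lam * coeff (R := K) (2*j) (Nser lam ^ k * Eser⁻¹)
              + Rmon k (j+2) + (-(algebraMap ℚ K lam / 2)) * Rmon k (j+1)
              + ((4:K) * RatFunc.X * Rmon k (j+2) - (RatFunc.X:K)^2 * Rmon k (j+1)
                  - Rmon (k+1) (j+2)) := by
            rw [eps, nc2]; ring
          rw [key, show (j+2:ℕ) = (j+1)+1 from rfl, Rmon_id k (j+1), add_zero]
          refine DegLe.add (DegLe.add (DegLe.add (DegLe.add ?_ ?_) ?_) ?_) ?_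
          · exact (degLe_eps.mul (ih ((j+1)+1))).of_le (by push_cast; omega)
          · exact ((degLe_nc2 lam).mul (ih (j+1))).of_le (by push_cast; omega)
          · exact ((degLe_nc4 lam).mul (hRle j)).of_le (by push_cast; omega)
          · exact (degLe_Rmon k ((j+1)+1)).of_le (by push_cast; omega)
          · exact ((DegLe.neg (degLe_half lam)).mul (degLe_Rmon k (j+1))).of_le
              (by push_cast; omega)

lemma rq_final {k s : ℕ} (hks : k ≤ s) :
    rq k s = (-1)^s * (2:ℚ)^(3*(k:ℤ)-2*(s:ℤ)-2) := by
  have hsub : ∑ a ∈ Finset.range (s+1), (k.choose a : ℚ)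
      = ∑ a ∈ Finset.range (k+1), (k.choose a : ℚ) := by
    refine (Finset.sum_subset ?_ ?_).symm
    · intro x hx
      rw [Finset.mem_range] at hx ⊢
      omega
    · intro x hx hnx
      rw [Finset.mem_range] at hx hnx
      rw [Nat.choose_eq_zero_of_lt (by omega)]
      simp
  have hch : ∑ a ∈ Finset.range (k+1), (k.choose a : ℚ) = 2^k := by
    rw_mod_cast [Nat.sum_range_choose]
  have h42 : (4:ℚ)^((k:ℤ)-(s:ℤ)-1) = (2:ℚ)^(2*((k:ℤ)-(s:ℤ)-1)) := by
    rw [show (4:ℚ) = 2^(2:ℤ) from by norm_num, ← zpow_mul]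
  rw [rq, hsub, hch, h42, show ((2:ℚ)^k) = (2:ℚ)^((k:ℕ):ℤ) from (zpow_natCast 2 k).symm,
    mul_assoc, ← zpow_add₀ (by norm_num : (2:ℚ) ≠ 0), show 2*((k:ℤ)-(s:ℤ)-1) + (k:ℤ) =
      3*(k:ℤ)-2*(s:ℤ)-2 from by ring]

lemma target_eq {k s : ℕ} (hks : k ≤ s) :
    (-1:K)^s * (2:K)^(3*(k:ℤ)-2*(s:ℤ)-2) * RatFunc.X^((k:ℤ)+(s:ℤ)-1) = Rmon k s := by
  rw [Rmon, mono, rq_final hks, map_mul, map_pow, map_neg, map_one, map_zpow₀, map_ofNat]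

end Aux

/-- For `0 ≤ k ≤ s`, the residue `F(k,s)` of `N(Y)^k/(Y^{2s}D(Y))`
satisfies: `F(k,s) - (-1)^s·2^{3k-2s-2}·t^{k+s-1}` is either zero or a rational
function of `t` of total degree strictly less than `k + s - 1`. (In the paper's
notation, `G(k,s) = (-1)^s 2^{3k-2s-2} t^{k+s-1}` for `k ≤ s`.) -/
theorem Fres_leading_term_of_le (lam : ℚ) (k s : ℕ) (hks : k ≤ s) :
    Fres lam k s - (-1) ^ s * (2 : RatFunc ℚ) ^ (3 * (k : ℤ) - 2 * (s : ℤ) - 2) *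
        RatFunc.X ^ ((k : ℤ) + (s : ℤ) - 1) = 0 ∨
      (Fres lam k s - (-1) ^ s * (2 : RatFunc ℚ) ^ (3 * (k : ℤ) - 2 * (s : ℤ) - 2) *
        RatFunc.X ^ ((k : ℤ) + (s : ℤ) - 1)).intDegree < (k : ℤ) + (s : ℤ) - 1 := by
  have h := Aux.prod_approx lam k s
  rw [← Aux.Fres_eq lam k s] at h
  rw [Aux.target_eq hks]
  rcases h with h | h
  · exact Or.inl h
  · exact Or.inr (lt_of_le_of_lt h (by omega))
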